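/- Let (U(t))_{t∈ℝ} be a strongly continuous one-parameter unitary group on a complex Hilbert space H, and let H = V₁ ⊕ ⋯ ⊕ Vₙ be an orthogonal decomposition of H into nonzero closed subspaces. Let a, b ∈ ℝ with a ≠ 0 and b ≠ 0. Suppose that U(a) permutes the subspaces {Vᵢ} and U(b) permutes the subspaces {Vᵢ}, and at least one of them permutes them non-trivially. Then a/b is rational. -/

import Mathlib

open scoped InnerProductSpace

/-- If a strongly continuous one-parameter unitary group `(U(t))_{t ∈ ℝ}` on a complex Hilbert
space `H` is such that `U(a)` and `U(b)` (with `a, b ≠ 0`) both permute the nonzero closed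
subspaces of an orthogonal decomposition `H = V₁ ⊕ ⋯ ⊕ Vₙ`, at least one of them permuting
them non-trivially, then `a / b` is rational. -/
theorem ratio_rational_of_permuting_subspaces {H : Type*} [NormedAddCommGroup H]
    [InnerProductSpace ℂ H] [CompleteSpace H]
    (U : ℝ → (H ≃ₗᵢ[ℂ] H)) (hUadd : ∀ s t : ℝ, U (s + t) = U s * U t)
    (hUcont : ∀ v : H, Continuous fun t : ℝ => U t v)
    {n : ℕ} (V : Fin n → Submodule ℂ H)
    (hVclosed : ∀ i, IsClosed (V i : Set H)) (hVne : ∀ i, V i ≠ ⊥)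
    (hVorth : ∀ i j, i ≠ j → ∀ x ∈ V i, ∀ y ∈ V j, ⟪x, y⟫_ℂ = 0)
    (hVsup : (⨆ i, V i) = ⊤)
    {a b : ℝ} (ha : a ≠ 0) (hb : b ≠ 0)
    (σa : Equiv.Perm (Fin n))
    (hσa : ∀ i, (V i).map ((U a).toLinearEquiv : H →ₗ[ℂ] H) = V (σa i))
    (σb : Equiv.Perm (Fin n))
    (hσb : ∀ i, (V i).map ((U b).toLinearEquiv : H →ₗ[ℂ] H) = V (σb i))
    (hnontrivial : σa ≠ 1 ∨ σb ≠ 1) :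
    ∃ r : ℚ, a / b = (r : ℝ) := by
  have hU0 : U 0 = 1 := by
    have h := (hUadd 0 0).symm
    rw [add_zero] at h
    exact mul_eq_left.mp h
  -- composition of maps
  have hmap : ∀ (s t : ℝ) (W : Submodule ℂ H),
      W.map ((U (s + t)).toLinearEquiv : H →ₗ[ℂ] H)
        = (W.map ((U t).toLinearEquiv : H →ₗ[ℂ] H)).map
            ((U s).toLinearEquiv : H →ₗ[ℂ] H) := by
    intro s t W
    rw [hUadd, ← Submodule.map_comp]
    rfl
  have hid : ∀ (W : Submodule ℂ H), W.map (((1 : H ≃ₗᵢ[ℂ] H)).toLinearEquiv : H →ₗ[ℂ] H) = W := by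
    intro W
    ext x
    simp [Submodule.mem_map]
    rfl
  -- iterate
  have hiter : ∀ (t : ℝ) (σ : Equiv.Perm (Fin n)),
      (∀ i, (V i).map ((U t).toLinearEquiv : H →ₗ[ℂ] H) = V (σ i)) →
      ∀ (k : ℕ) (i : Fin n),
        (V i).map ((U ((k : ℝ) * t)).toLinearEquiv : H →ₗ[ℂ] H) = V ((σ ^ k) i) := by
    intro t σ hσ k
    induction k with
    | zero =>
        intro i
        simpa [hU0] using hid (V i)
    | succ k ih =>
        intro i
        have h1 : ((k + 1 : ℕ) : ℝ) * t = (k : ℝ) * t + t := by push_cast; ring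
        rw [h1, hmap, hσ, ih]
        congr 1
  -- the subgroup of times fixing every subspace
  set S : AddSubgroup ℝ :=
    { carrier := {t : ℝ | ∀ i, (V i).map ((U t).toLinearEquiv : H →ₗ[ℂ] H) = V i}
      zero_mem' := by
        intro i
        simpa [hU0] using hid (V i)
      add_mem' := by
        intro s t hs ht i
        rw [hmap, ht, hs]
      neg_mem' := by
        intro t ht i
        have h := hmap (-t) t (V i)
        rw [ht i] at h
        rw [show -t + t = 0 by ring] at h
        rw [← h]
        simpa [hU0] using hid (V i) } with hSdef
  set N : ℕ := Fintype.card (Equiv.Perm (Fin n)) with hN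
  have hNpos : 0 < N := Fintype.card_pos
  have hNne : (N : ℝ) ≠ 0 := Nat.cast_ne_zero.mpr hNpos.ne'
  have hNa : ((N : ℝ) * a) ∈ S := by
    intro i
    rw [hiter a σa hσa N i, pow_card_eq_one]
    rfl
  have hNb : ((N : ℝ) * b) ∈ S := by
    intro i
    rw [hiter b σb hσb N i, pow_card_eq_one]
    rfl
  rcases (AddSubgroup.closure {(N : ℝ) * a, (N : ℝ) * b}).dense_or_cyclic with hdense | ⟨g, hg⟩
  · -- dense case: contradiction
    exfalso
    have hle : AddSubgroup.closure {(N : ℝ) * a, (N : ℝ) * b} ≤ S := by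
      rw [AddSubgroup.closure_le]
      intro x hx
      simp only [Set.mem_insert_iff, Set.mem_singleton_iff] at hx
      rcases hx with h | h <;> subst h
      · exact hNa
      · exact hNb
    have hSdense : Dense (S : Set ℝ) := hdense.mono hle
    have key : ∀ (c : ℝ) (σc : Equiv.Perm (Fin n)),
        (∀ i, (V i).map ((U c).toLinearEquiv : H →ₗ[ℂ] H) = V (σc i)) → σc ≠ 1 → False := by
      intro c σc hσc hσcne
      obtain ⟨i₀, hi₀⟩ : ∃ i, σc i ≠ i := by
        by_contra hcon
        push_neg at hcon
        exact hσcne (Equiv.ext hcon)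
      obtain ⟨v, hv, hv0⟩ := Submodule.ne_bot_iff _ |>.mp (hVne i₀)
      haveI : CompleteSpace (V i₀) := (hVclosed i₀).completeSpace_coe
      set f : ℝ → ℝ := fun t => ‖((V i₀).orthogonalProjectionOnto (U t v) : H)‖ with hf
      have hfc : Continuous f := by
        apply Continuous.norm
        exact continuous_subtype_val.comp
          (((V i₀).orthogonalProjectionOnto).continuous.comp (hUcont v))
      have hfS : Set.EqOn f (fun _ => ‖v‖) (S : Set ℝ) := by
        intro t ht
        have hmem : U t v ∈ V i₀ := by
          rw [← ht i₀]
          exact Submodule.mem_map_of_mem hv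
        simp only [hf]
        rw [show U t v = ((⟨U t v, hmem⟩ : V i₀) : H) from rfl, Submodule.orthogonalProjectionOnto_mem_subspace_eq_self]
        exact (U t).norm_map v
      have hfall : f = fun _ => ‖v‖ :=
        hfc.ext_on hSdense continuous_const hfS
      have hfc0 : f c = 0 := by
        have hmem : U c v ∈ V (σc i₀) := by
          rw [← hσc i₀]
          exact Submodule.mem_map_of_mem hv
        have horth : U c v ∈ (V i₀)ᗮ := by
          rw [Submodule.mem_orthogonal]
          intro u hu
          exact hVorth i₀ (σc i₀) (Ne.symm hi₀) u hu _ hmem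
        simp only [hf]
        rw [Submodule.orthogonalProjectionOnto_apply_of_mem_orthogonal horth]
        simp
      rw [hfall] at hfc0
      exact hv0 (norm_eq_zero.mp hfc0)
    rcases hnontrivial with h | h
    · exact key a σa hσa h
    · exact key b σb hσb h
  · -- cyclic case
    have hag : ((N : ℝ) * a) ∈ AddSubgroup.closure {(N : ℝ) * a, (N : ℝ) * b} :=
      AddSubgroup.subset_closure (by simp)
    have hbg : ((N : ℝ) * b) ∈ AddSubgroup.closure {(N : ℝ) * a, (N : ℝ) * b} :=
      AddSubgroup.subset_closure (by simp)
    rw [hg, ← AddSubgroup.zmultiples_eq_closure, AddSubgroup.mem_zmultiples_iff] at hag hbg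
    obtain ⟨m, hm⟩ := hag
    obtain ⟨k, hk⟩ := hbg
    have hg0 : g ≠ 0 := by
      rintro rfl
      apply mul_ne_zero hNne ha
      rw [← hm]; simp
    have hk0 : (k : ℝ) ≠ 0 := by
      intro h
      apply mul_ne_zero hNne hb
      rw [← hk, zsmul_eq_mul, h, zero_mul]
    refine ⟨(m : ℚ) / (k : ℚ), ?_⟩
    have h1 : a / b = ((N : ℝ) * a) / ((N : ℝ) * b) := (mul_div_mul_left a b hNne).symm
    rw [h1, ← hm, ← hk, zsmul_eq_mul, zsmul_eq_mul, mul_div_mul_right _ _ hg0]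
    push_cast
    ring
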